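/- arXiv:2601.20431 — 3 statements merged into one kernel-verified Lean document; each statement's English description precedes it below -/
import Mathlib

section
/- Let z = a+ib and w = c+id be points of the open unit disk both lying in the open right half-plane (a > 0 and c > 0) or both in the open left half-plane (a < 0 and c < 0). Then [z, w] < [z, -conj(w)], where -conj(w) is the reflection of w across the imaginary axis. -/
open Complex

noncomputable def pd (z w : ℂ) : ℝ := ‖(z - w) / (1 - (starRingEnd ℂ) z * w)‖

theorem pd_lt_pd_reflection (z w : ℂ) (hz : ‖z‖ < 1) (hw : ‖w‖ < 1)
    (hside : (0 < z.re ∧ 0 < w.re) ∨ (z.re < 0 ∧ w.re < 0)) :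
    pd z w < pd z (-(starRingEnd ℂ) w) := by
  have hac : 0 < z.re * w.re := by
    rcases hside with ⟨h1, h2⟩ | ⟨h1, h2⟩
    · exact mul_pos h1 h2
    · exact mul_pos_of_neg_of_neg h1 h2
  have hz2 : z.re ^ 2 + z.im ^ 2 < 1 := by
    have h := Complex.sq_norm z
    rw [Complex.normSq_apply] at h
    nlinarith [norm_nonneg z]
  have hw2 : w.re ^ 2 + w.im ^ 2 < 1 := by
    have h := Complex.sq_norm w
    rw [Complex.normSq_apply] at h
    nlinarith [norm_nonneg w]
  have hzw1 : ‖(starRingEnd ℂ) z * w‖ < 1 := by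
    rw [norm_mul, Complex.norm_conj]
    nlinarith [norm_nonneg z, norm_nonneg w]
  have hzw2 : ‖(starRingEnd ℂ) z * -(starRingEnd ℂ) w‖ < 1 := by
    rw [norm_mul, Complex.norm_conj, norm_neg, Complex.norm_conj]
    nlinarith [norm_nonneg z, norm_nonneg w]
  have hd1 : 0 < ‖1 - (starRingEnd ℂ) z * w‖ := by
    rw [norm_pos_iff, sub_ne_zero]
    intro h
    rw [← h] at hzw1
    simp at hzw1
  have hd2 : 0 < ‖1 - (starRingEnd ℂ) z * -(starRingEnd ℂ) w‖ := by
    rw [norm_pos_iff, sub_ne_zero]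
    intro h
    rw [← h] at hzw2
    simp at hzw2
  unfold pd
  rw [norm_div, norm_div, div_lt_div_iff₀ hd1 hd2]
  apply lt_of_pow_lt_pow_left₀ 2 (mul_nonneg (norm_nonneg _) (norm_nonneg _))
  rw [mul_pow, mul_pow, Complex.sq_norm, Complex.sq_norm, Complex.sq_norm, Complex.sq_norm]
  simp only [Complex.normSq_apply, Complex.sub_re, Complex.sub_im, Complex.add_re,
    Complex.add_im, Complex.mul_re, Complex.mul_im, Complex.one_re, Complex.one_im,
    Complex.neg_re, Complex.neg_im, Complex.conj_re, Complex.conj_im]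
  have hP : 0 < (1 - (z.re ^ 2 + z.im ^ 2)) * (1 - (w.re ^ 2 + w.im ^ 2)) := by
    nlinarith
  nlinarith [mul_pos hac hP]
end

section
/- For every z in the open unit disk, (1/π)·∫_D (log(1/[z,w]))² · (1-|w|²)⁻² dA(w) = π²/12, where [z,w] = |z-w|/|1-conj(z)w|. In particular this integral is finite and independent of z. -/
open Complex MeasureTheory

open Set Filter Real intervalIntegral

lemma tendsto_pow_mul_log_pow (m j : ℕ) (hm : 0 < m) :
    Tendsto (fun x : ℝ => x ^ m * Real.log x ^ j) (nhdsWithin 0 (Set.Ioi 0)) (nhds 0) := by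
  rcases Nat.eq_zero_or_pos j with hj | hj
  · subst hj
    simpa [hm.ne'] using ((continuous_pow m).tendsto (0:ℝ)).mono_left nhdsWithin_le_nhds
  · have h := (tendsto_log_mul_rpow_nhdsGT_zero
      (by positivity : (0:ℝ) < (m:ℝ)/(j:ℝ))).pow j
    rw [zero_pow hj.ne'] at h
    refine h.congr' ?_
    filter_upwards [self_mem_nhdsWithin] with x hx
    have hx0 : (0:ℝ) < x := hx
    rw [mul_pow, ← Real.rpow_natCast (x ^ ((m:ℝ)/(j:ℝ))) j, ← Real.rpow_mul hx0.le,
      div_mul_cancel₀ _ (by exact_mod_cast hj.ne' : (j:ℝ) ≠ 0), Real.rpow_natCast, mul_comm]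

lemma tendsto_pow_mul_log_pow' (m j : ℕ) (hm : 0 < m) {s : Set ℝ} (hs : s ⊆ Set.Ici 0) :
    Tendsto (fun x : ℝ => x ^ m * Real.log x ^ j) (nhdsWithin 0 s) (nhds 0) := by
  have h1 : Tendsto (fun x : ℝ => x ^ m * Real.log x ^ j)
      (nhdsWithin 0 (insert (0:ℝ) (Set.Ioi 0))) (nhds 0) := by
    rw [nhdsWithin_insert, tendsto_sup]
    constructor
    · simpa [hm.ne'] using (tendsto_pure_pure (fun x : ℝ => x ^ m * Real.log x ^ j) 0).mono_right
        (pure_le_nhds _)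
    · exact tendsto_pow_mul_log_pow m j hm
  exact h1.mono_left (nhdsWithin_mono _ (fun y hy => by
    rcases eq_or_ne y 0 with rfl | h0
    · exact Set.mem_insert _ _
    · exact Set.mem_insert_of_mem _ ((hs hy).lt_of_ne' h0)))

lemma contOn_pow_mul_log_sq (k : ℕ) :
    ContinuousOn (fun x : ℝ => x ^ (k+1) * Real.log x ^ 2) (Set.Icc 0 1) := by
  intro x hx
  rcases eq_or_ne x 0 with rfl | hx0
  · have h := tendsto_pow_mul_log_pow' (k+1) 2 k.succ_pos
      (fun y (hy : y ∈ Set.Icc (0:ℝ) 1) => hy.1)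
    unfold ContinuousWithinAt
    simpa using h
  · exact ((continuous_pow _).continuousAt.mul
      ((Real.continuousAt_log hx0).pow 2)).continuousWithinAt

lemma integral_pow_mul_log_sq (k : ℕ) :
    ∫ x in (0:ℝ)..1, x ^ (k+1) * Real.log x ^ 2 = 2 / ((k:ℝ)+2)^3 := by
  set c : ℝ := (k:ℝ) + 2 with hc
  have hc0 : c ≠ 0 := by positivity
  set F : ℝ → ℝ := fun x => x^(k+2) * Real.log x^2/c - 2*(x^(k+2) * Real.log x)/c^2
      + 2*x^(k+2)/c^3 with hF
  have hcont : ContinuousOn F (Set.Icc 0 1) := by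
    intro x hx
    rcases eq_or_ne x 0 with rfl | hx0
    · have hs : Set.Icc (0:ℝ) 1 ⊆ Set.Ici 0 := fun y hy => hy.1
      have t2 := tendsto_pow_mul_log_pow' (k+2) 2 (by omega) hs
      have t1 := tendsto_pow_mul_log_pow' (k+2) 1 (by omega) hs
      have t0 := tendsto_pow_mul_log_pow' (k+2) 0 (by omega) hs
      unfold ContinuousWithinAt
      have : F 0 = 0 := by simp [hF]
      rw [this]
      have := ((t2.div_const c).sub ((t1.const_mul 2).div_const (c^2))).add
        ((t0.const_mul 2).div_const (c^3))
      simpa [hF, mul_comm, mul_assoc, mul_left_comm] using this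
    · exact (((continuous_pow _).continuousAt.mul
        ((Real.continuousAt_log hx0).pow 2)).div_const c |>.sub
        ((((continuous_pow _).continuousAt.mul
        (Real.continuousAt_log hx0)).const_mul 2).div_const (c^2)) |>.add
        (((continuous_pow _).continuousAt.const_mul 2).div_const (c^3))).continuousWithinAt
  have hderiv : ∀ x ∈ Set.Ioo (0:ℝ) 1, HasDerivAt F (x ^ (k+1) * Real.log x ^ 2) x := by
    intro x hx
    have hx0 : x ≠ 0 := hx.1.ne'
    have hp : HasDerivAt (fun x : ℝ => x^(k+2)) (((k:ℝ)+2)*x^(k+1)) x := by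
      have := hasDerivAt_pow (k+2) x
      norm_num at this ⊢
      convert this using 2
    have hl : HasDerivAt Real.log x⁻¹ x := Real.hasDerivAt_log hx0
    have hl2 : HasDerivAt (fun x => Real.log x^2) (2*Real.log x * x⁻¹) x := by
      simpa using hl.fun_pow 2
    have hD := (((hp.mul hl2).div_const c).sub
      (((hp.mul hl).const_mul 2).div_const (c^2))).add ((hp.const_mul 2).div_const (c^3))
    refine hD.congr_deriv ?_
    have hxx : x^(k+2) = x^(k+1) * x := pow_succ x (k+1)
    rw [hxx]
    field_simp
    ring
  have hint : IntervalIntegrable (fun x : ℝ => x ^ (k+1) * Real.log x ^ 2) volume 0 1 := by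
    apply ContinuousOn.intervalIntegrable
    rw [Set.uIcc_of_le (by norm_num : (0:ℝ) ≤ 1)]
    exact contOn_pow_mul_log_sq k
  rw [integral_eq_sub_of_hasDerivAt_of_le (by norm_num) hcont hderiv hint]
  simp [hF]

lemma integral_term (n : ℕ) :
    ∫ x in Set.Ioo (0:ℝ) 1, ((n:ℝ)+1) * (x^(2*n+1) * Real.log x^2) =
      1/(4*((n:ℝ)+1)^2) := by
  rw [MeasureTheory.integral_const_mul, ← MeasureTheory.integral_Ioc_eq_integral_Ioo,
    ← intervalIntegral.integral_of_le (by norm_num : (0:ℝ) ≤ 1),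
    integral_pow_mul_log_sq (2*n)]
  have h1 : ((n:ℝ)+1) ≠ 0 := by positivity
  field_simp
  push_cast
  ring

lemma hasSum_pointwise {x : ℝ} (hx : x ∈ Set.Ioo (0:ℝ) 1) :
    HasSum (fun n : ℕ => ((n:ℝ)+1) * (x^(2*n+1) * Real.log x^2))
      (x * Real.log x^2 * ((1-x^2)⁻¹)^2) := by
  have hx2 : ‖x^2‖ < 1 := by
    rw [Real.norm_eq_abs, _root_.abs_of_nonneg (sq_nonneg x)]
    nlinarith [hx.1, hx.2]
  have hne : (1:ℝ) - x^2 ≠ 0 := by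
    have : x^2 < 1 := by nlinarith [hx.1, hx.2]
    nlinarith
  have hgeo := hasSum_geometric_of_norm_lt_one hx2
  have hmul := hasSum_coe_mul_geometric_of_norm_lt_one hx2
  have hsum := (hmul.add hgeo).mul_left (x * Real.log x^2)
  have heq : ∀ n : ℕ, x * Real.log x^2 * ((n:ℝ) * (x^2)^n + (x^2)^n)
      = ((n:ℝ)+1) * (x^(2*n+1) * Real.log x^2) := by
    intro n
    rw [pow_succ x (2*n), pow_mul]
    ring
  have hval : x * Real.log x^2 * (x^2/(1-x^2)^2 + (1-x^2)⁻¹)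
      = x * Real.log x^2 * ((1-x^2)⁻¹)^2 := by
    field_simp
    ring
  rw [hval] at hsum
  exact (funext heq : _) ▸ hsum

lemma tsum_inv_succ_sq : ∑' n : ℕ, (((n:ℝ)+1)^2)⁻¹ = Real.pi^2/6 := by
  have h0 : Summable (fun n : ℕ => 1/((n:ℝ))^2) := hasSum_zeta_two.summable
  have h1 := hasSum_zeta_two.tsum_eq
  rw [h0.tsum_eq_zero_add] at h1
  rw [eq_comm]
  simpa using h1.symm

lemma radial_integral :
    ∫ x in Set.Ioo (0:ℝ) 1, x * Real.log x^2 * ((1-x^2)⁻¹)^2 = Real.pi^2/24 := by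
  set F : ℕ → ℝ → ℝ := fun n x => ((n:ℝ)+1) * (x^(2*n+1) * Real.log x^2) with hF
  have hInt : ∀ n, Integrable (F n) (volume.restrict (Set.Ioo (0:ℝ) 1)) := by
    intro n
    have h := (contOn_pow_mul_log_sq (2*n)).integrableOn_Icc (μ := volume)
    exact ((h.mono_set Set.Ioo_subset_Icc_self).const_mul _)
  have hNormEq : ∀ n, ∫ x in Set.Ioo (0:ℝ) 1, ‖F n x‖ = 1/(4*((n:ℝ)+1)^2) := by
    intro n
    rw [← integral_term n]
    refine setIntegral_congr_fun measurableSet_Ioo (fun x hx => ?_)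
    have hx0 : (0:ℝ) ≤ x := hx.1.le
    rw [Real.norm_eq_abs, _root_.abs_of_nonneg (by positivity)]
  have hSum : Summable (fun n => ∫ x in Set.Ioo (0:ℝ) 1, ‖F n x‖) := by
    simp_rw [hNormEq]
    have h0 : Summable (fun n : ℕ => 1/((n:ℝ))^2) := hasSum_zeta_two.summable
    have h1 := (h0.comp_injective Nat.succ_injective).mul_left (1/4 : ℝ)
    refine h1.congr (fun n => ?_)
    push_cast
    simp only [Function.comp_apply, Nat.cast_succ]
    field_simp
  have key := MeasureTheory.integral_tsum_of_summable_integral_norm hInt hSum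
  have hL : ∫ x in Set.Ioo (0:ℝ) 1, ∑' n, F n x
      = ∫ x in Set.Ioo (0:ℝ) 1, x * Real.log x^2 * ((1-x^2)⁻¹)^2 :=
    setIntegral_congr_fun measurableSet_Ioo (fun x hx => (hasSum_pointwise hx).tsum_eq)
  rw [hL] at key
  rw [← key]
  have hterm : ∀ n : ℕ, ∫ x in Set.Ioo (0:ℝ) 1, F n x = (1/4) * ((((n:ℝ)+1)^2)⁻¹) := by
    intro n
    rw [hF]
    rw [integral_term n]
    rw [one_div, mul_inv]
    norm_num
  simp_rw [hterm]
  rw [tsum_mul_left, tsum_inv_succ_sq]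
  ring

lemma disk_eq_ball : {w : ℂ | ‖w‖ < 1} = Metric.ball (0:ℂ) 1 := by
  ext w; simp [Metric.mem_ball, Complex.dist_eq]

lemma radial_to_polar :
    ∫ w in {w : ℂ | ‖w‖ < 1},
        (Real.log (1/‖w‖))^2 * ((1 - ‖w‖^2)⁻¹)^2
      = (2*Real.pi) * ∫ x in Set.Ioo (0:ℝ) 1, x * Real.log x^2 * ((1-x^2)⁻¹)^2 := by
  have hmeas : MeasurableSet {w : ℂ | ‖w‖ < 1} := by
    rw [disk_eq_ball]; exact measurableSet_ball
  set f : ℂ → ℝ := {w : ℂ | ‖w‖ < 1}.indicator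
    (fun w => (Real.log (1/‖w‖))^2 * ((1 - ‖w‖^2)⁻¹)^2) with hf
  have h1 : ∫ w, f w = ∫ w in {w : ℂ | ‖w‖ < 1},
      (Real.log (1/‖w‖))^2 * ((1 - ‖w‖^2)⁻¹)^2 :=
    integral_indicator hmeas
  have h2 := Complex.integral_comp_polarCoord_symm f
  set g : ℝ → ℝ := (Set.Ioo (0:ℝ) 1).indicator
    (fun r => r * (Real.log r^2 * ((1-r^2)⁻¹)^2)) with hg
  have h3 : ∫ p in polarCoord.target, p.1 • f (Complex.polarCoord.symm p)
      = ∫ p in polarCoord.target, g p.1 * (1:ℝ) := by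
    refine setIntegral_congr_fun polarCoord.open_target.measurableSet (fun p hp => ?_)
    rw [polarCoord_target] at hp
    have hp1 : 0 < p.1 := hp.1
    have habs : ‖Complex.polarCoord.symm p‖ = p.1 := by
      rw [Complex.norm_polarCoord_symm, _root_.abs_of_pos hp1]
    rw [hf, hg, mul_one, smul_eq_mul]
    by_cases hlt : p.1 < 1
    · rw [Set.indicator_of_mem (by simp only [Set.mem_setOf_eq, habs]; exact hlt : _ ∈ {w : ℂ | ‖w‖ < 1}),
        Set.indicator_of_mem (by exact ⟨hp1, hlt⟩), habs]
      rw [one_div, Real.log_inv]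
      ring
    · rw [Set.indicator_of_notMem (by simp only [Set.mem_setOf_eq, habs]; exact hlt),
        Set.indicator_of_notMem (fun h => hlt h.2), mul_zero]
  rw [h3] at h2
  rw [← h1, ← h2, polarCoord_target]
  rw [Measure.volume_eq_prod]
  erw [setIntegral_prod_mul g (fun _ : ℝ => (1:ℝ)) (Set.Ioi (0:ℝ)) (Set.Ioo (-Real.pi) Real.pi)]
  have h4 : ∫ θ in Set.Ioo (-Real.pi) Real.pi, (1:ℝ) = 2*Real.pi := by
    rw [setIntegral_const, Real.volume_real_Ioo_of_le (by linarith [Real.pi_pos]), smul_eq_mul,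
      mul_one]
    ring
  have h5 : ∫ r in Set.Ioi (0:ℝ), g r
      = ∫ x in Set.Ioo (0:ℝ) 1, x * Real.log x^2 * ((1-x^2)⁻¹)^2 := by
    rw [hg, setIntegral_indicator measurableSet_Ioo,
      Set.inter_eq_self_of_subset_right Set.Ioo_subset_Ioi_self]
    exact setIntegral_congr_fun measurableSet_Ioo (fun x _ => by ring)
  rw [h4, h5]
  ring


lemma det_mul_right_clm (c : ℂ) :
    ((ContinuousLinearMap.smulRight (1:ℂ→L[ℂ]ℂ) c).restrictScalars ℝ).det
      = Complex.normSq c := by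
  have h : (((ContinuousLinearMap.smulRight (1:ℂ→L[ℂ]ℂ) c).restrictScalars ℝ) : ℂ →ₗ[ℝ] ℂ)
      = Algebra.lmul ℝ ℂ c := by
    apply LinearMap.ext; intro x
    simp [mul_comm]
  rw [ContinuousLinearMap.det, h, ← Algebra.norm_apply, Algebra.norm_complex_apply]

lemma key_normSq (z w : ℂ) :
    Complex.normSq (1 - (starRingEnd ℂ) z * w) - Complex.normSq (z - w)
      = (1 - Complex.normSq z) * (1 - Complex.normSq w) := by
  simp only [Complex.normSq_apply, Complex.sub_re, Complex.sub_im, Complex.mul_re,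
    Complex.mul_im, Complex.one_re, Complex.one_im, RCLike.star_def, Complex.conj_re,
    Complex.conj_im]
  ring

lemma abs_lt_one_iff_normSq (w : ℂ) : ‖w‖ < 1 ↔ Complex.normSq w < 1 := by
  rw [← Complex.sq_norm]
  constructor
  · intro h; nlinarith [norm_nonneg w]
  · intro h; nlinarith [norm_nonneg w]

lemma moebius_invariance (z : ℂ) (hz : ‖z‖ < 1) :
    ∫ w in {w : ℂ | ‖w‖ < 1},
        (Real.log (1/pd z w))^2 * ((1 - ‖w‖^2)⁻¹)^2
      = ∫ w in {w : ℂ | ‖w‖ < 1},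
        (Real.log (1/‖w‖))^2 * ((1 - ‖w‖^2)⁻¹)^2 := by
  set D := {w : ℂ | ‖w‖ < 1} with hD
  have hmeas : MeasurableSet D := by
    have : D = Metric.ball (0:ℂ) 1 := by
      ext w; rw [hD]; simp [Metric.mem_ball, Complex.dist_eq]
    rw [this]; exact measurableSet_ball
  set cz := (starRingEnd ℂ) z with hcz
  have hnsz : Complex.normSq z < 1 := (abs_lt_one_iff_normSq z).mp hz
  have hzP : (0:ℝ) < 1 - Complex.normSq z := by linarith
  have hz1 : (1:ℂ) - (Complex.normSq z : ℂ) ≠ 0 := by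
    intro h
    have := congrArg Complex.re h
    simp at this
    linarith
  set T : ℂ → ℂ := fun w => (z - w)/(1 - cz*w) with hT
  have h1 : ∀ w ∈ D, (1:ℂ) - cz * w ≠ 0 := by
    intro w hw heq
    have h2 : cz * w = 1 := by linear_combination -heq
    have h3 : ‖cz * w‖ = 1 := by rw [h2, norm_one]
    rw [norm_mul, hcz, Complex.norm_conj] at h3
    have hw' : ‖w‖ < 1 := hw
    nlinarith [norm_nonneg z, norm_nonneg w]
  have hX : ∀ w ∈ D, (0:ℝ) < Complex.normSq (1 - cz*w) :=
    fun w hw => Complex.normSq_pos.mpr (h1 w hw)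
  have hQ : ∀ w ∈ D, (0:ℝ) < 1 - Complex.normSq w := by
    intro w hw
    have : Complex.normSq w < 1 := (abs_lt_one_iff_normSq w).mp hw
    linarith
  have hnsT : ∀ w ∈ D, Complex.normSq (T w)
      = Complex.normSq (z - w) / Complex.normSq (1 - cz*w) := by
    intro w hw; rw [hT]; exact map_div₀ Complex.normSq _ _
  have honesub : ∀ w ∈ D, 1 - Complex.normSq (T w)
      = (1 - Complex.normSq z) * (1 - Complex.normSq w) / Complex.normSq (1 - cz*w) := by
    intro w hw
    rw [hnsT w hw, ← key_normSq z w, ← hcz]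
    rw [sub_div, div_self (hX w hw).ne']
  have hptD : ∀ w ∈ D, T w ∈ D := by
    intro w hw
    have h2 := honesub w hw
    have h3 : 0 < 1 - Complex.normSq (T w) := by
      rw [h2]; exact div_pos (mul_pos hzP (hQ w hw)) (hX w hw)
    have : Complex.normSq (T w) < 1 := by linarith
    exact (abs_lt_one_iff_normSq (T w)).mpr this
  have e1 : ∀ w ∈ D, z - T w = w * (1 - (Complex.normSq z:ℂ))/(1 - cz*w) := by
    intro w hw
    rw [hT]
    rw [← Complex.mul_conj z, ← hcz]
    rw [eq_div_iff (h1 w hw), sub_mul, div_mul_cancel₀ _ (h1 w hw)]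
    ring
  have e2 : ∀ w ∈ D, 1 - cz * T w = (1 - (Complex.normSq z:ℂ))/(1 - cz*w) := by
    intro w hw
    rw [hT]
    rw [← Complex.mul_conj z]
    field_simp [h1 w hw]
    ring
  have hTfrac : ∀ w ∈ D, (z - T w)/(1 - cz * T w) = w := by
    intro w hw
    rw [e1 w hw, e2 w hw]
    rw [div_div_div_cancel_right₀]
    · exact mul_div_cancel_right₀ w hz1
    · exact h1 w hw
  have hTT : ∀ w ∈ D, T (T w) = w := hTfrac
  have hpdT : ∀ w ∈ D, pd z (T w) = ‖w‖ := by
    intro w hw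
    rw [pd, hcz] at *
    rw [hTfrac w hw]
  set d : ℂ → ℂ := fun w => ((Complex.normSq z : ℂ) - 1)/(1 - cz*w)^2 with hd
  have hDeriv : ∀ w ∈ D, HasDerivAt T (d w) w := by
    intro w hw
    have hu : HasDerivAt (fun w : ℂ => z - w) (-1 : ℂ) w := by
      simpa using (hasDerivAt_id w).const_sub z
    have hv : HasDerivAt (fun w : ℂ => 1 - cz*w) (-cz) w := by
      simpa using ((hasDerivAt_id w).const_mul cz).const_sub 1
    have h := hu.div hv (h1 w hw)
    refine h.congr_deriv ?_
    rw [hd]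
    have hden : ((1:ℂ) - cz*w)^2 ≠ 0 := pow_ne_zero _ (h1 w hw)
    rw [← Complex.mul_conj z]
    field_simp
    ring
  set f' : ℂ → (ℂ →L[ℝ] ℂ) := fun w =>
    (ContinuousLinearMap.smulRight (1:ℂ→L[ℂ]ℂ) (d w)).restrictScalars ℝ with hf'
  have hF : ∀ w ∈ D, HasFDerivWithinAt T (f' w) D w := by
    intro w hw
    exact (((hDeriv w hw).hasFDerivAt).restrictScalars ℝ).hasFDerivWithinAt
  have hInj : Set.InjOn T D := by
    intro w1 hw1 w2 hw2 heq
    rw [← hTT w1 hw1, ← hTT w2 hw2, heq]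
  have hImage : T '' D = D := by
    apply subset_antisymm
    · rintro _ ⟨w, hw, rfl⟩; exact hptD w hw
    · intro w hw; exact ⟨T w, hptD w hw, hTT w hw⟩
  have cov := integral_image_eq_integral_abs_det_fderiv_smul volume hmeas hF hInj
    (fun w => (Real.log (1/pd z w))^2 * ((1 - ‖w‖^2)⁻¹)^2)
  rw [hImage] at cov
  rw [cov]
  refine setIntegral_congr_fun hmeas (fun w hw => ?_)
  have hdet : (f' w).det = Complex.normSq (d w) := det_mul_right_clm (d w)
  rw [hdet, _root_.abs_of_nonneg (Complex.normSq_nonneg _), smul_eq_mul, hpdT w hw]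
  have hnsd : Complex.normSq (d w)
      = (1 - Complex.normSq z)^2 / (Complex.normSq (1 - cz*w))^2 := by
    rw [hd]
    rw [map_div₀ Complex.normSq, map_pow]
    congr 1
    have : (Complex.normSq z : ℂ) - 1 = (((Complex.normSq z - 1 : ℝ)) : ℂ) := by push_cast; ring
    rw [this, Complex.normSq_ofReal]
    ring
  have habsT : ‖T w‖^2 = Complex.normSq (T w) := Complex.sq_norm _
  have habsw : ‖w‖^2 = Complex.normSq w := Complex.sq_norm w
  rw [habsT, habsw, honesub w hw, hnsd]
  have hXw := hX w hw
  have hQw := hQ w hw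
  have hXw' := hXw.ne'
  have hQw' := hQw.ne'
  have hzP' := hzP.ne'
  field_simp

theorem integral_log_pd_sq (z : ℂ) (hz : ‖z‖ < 1) :
    (1 / Real.pi) *
      ∫ w in {w : ℂ | ‖w‖ < 1},
        (Real.log (1 / pd z w)) ^ 2 * (1 - ‖w‖ ^ 2)⁻¹ ^ 2 =
      Real.pi ^ 2 / 12 := by
  rw [moebius_invariance z hz, radial_to_polar, radial_integral]
  have hpi := Real.pi_ne_zero
  field_simp
  ring
end

section
/- For a ∈ ℂ, ∫₀^{2π} log|1 - a·e^{iθ}| dθ equals 0 if |a| ≤ 1 and equals 2π·log|a| if |a| > 1. -/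
open Complex intervalIntegral Real MeasureTheory Set Metric

-- slit plane membership
lemma aux_slit {a z : ℂ} (ha : ‖a‖ < 1) (hz : ‖z‖ ≤ 1) :
    (1 - a * z) ∈ Complex.slitPlane := by
  left
  have h1 : (a * z).re ≤ ‖a * z‖ := Complex.re_le_norm _
  have h2 : ‖a * z‖ < 1 := by
    rw [norm_mul]
    calc ‖a‖ * ‖z‖ ≤ ‖a‖ * 1 :=
      mul_le_mul_of_nonneg_left hz (norm_nonneg a)
    _ < 1 := by simpa using ha
  simp only [Complex.sub_re, Complex.one_re]
  linarith

-- nonvanishing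
lemma aux_ne {a z : ℂ} (ha : ‖a‖ < 1) (hz : ‖z‖ ≤ 1) :
    1 - a * z ≠ 0 := by
  intro h
  have := aux_slit ha hz
  rw [h] at this
  simp [Complex.slitPlane] at this

lemma aux_cont {a : ℂ} (ha : ‖a‖ < 1) :
    Continuous (fun θ : ℝ => Real.log (‖1 - a * Complex.exp (θ * Complex.I)‖)) := by
  apply Continuous.log
  · exact continuous_norm.comp (by fun_prop)
  · intro θ
    simp only [ne_eq, norm_eq_zero]
    exact aux_ne ha (by simp [Complex.norm_exp])

lemma aux_small {a : ℂ} (ha : ‖a‖ < 1) :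
    ∫ θ in (0:ℝ)..(2 * Real.pi),
      Real.log (‖1 - a * Complex.exp (θ * Complex.I)‖) = 0 := by
  have key := Complex.circleIntegral_sub_center_inv_smul_of_differentiable_on_off_countable
    (R := 1) (c := 0) (f := fun z => Complex.log (1 - a * z)) one_pos Set.countable_empty
    (fun z hz => (DifferentiableAt.clog
      ((differentiableAt_const _).sub (differentiableAt_id.const_mul a))
      (aux_slit ha (by simpa [Complex.dist_eq] using hz))).continuousAt.continuousWithinAt)
    (fun z hz => DifferentiableAt.clog
      ((differentiableAt_const _).sub (differentiableAt_id.const_mul a))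
      (aux_slit ha (le_of_lt (by simpa [Complex.dist_eq] using hz.1))))
  rw [circleIntegral] at key
  simp only [deriv_circleMap, circleMap_zero, sub_zero, smul_eq_mul, one_mul,
    Complex.ofReal_one, mul_zero, Complex.log_one] at key
  have key2 : ∫ θ in (0:ℝ)..(2 * Real.pi),
      Complex.I * Complex.log (1 - a * Complex.exp (θ * Complex.I)) = 0 := by
    rw [← key]
    apply intervalIntegral.integral_congr
    intro θ _
    have hne : Complex.exp (θ * Complex.I) ≠ 0 := Complex.exp_ne_zero _
    field_simp
  rw [intervalIntegral.integral_const_mul] at key2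
  have key3 : ∫ θ in (0:ℝ)..(2 * Real.pi),
      Complex.log (1 - a * Complex.exp (θ * Complex.I)) = 0 := by
    have := mul_eq_zero.mp key2
    simpa [Complex.I_ne_zero] using this
  have hint : IntervalIntegrable (fun θ : ℝ => Complex.log (1 - a * Complex.exp (θ * Complex.I)))
      volume 0 (2 * Real.pi) := by
    apply Continuous.intervalIntegrable
    rw [continuous_iff_continuousAt]
    intro θ
    exact ContinuousAt.clog (by fun_prop) (aux_slit ha (by simp [Complex.norm_exp]))
  calc ∫ θ in (0:ℝ)..(2 * Real.pi), Real.log (‖1 - a * Complex.exp (θ * Complex.I)‖)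
      = ∫ θ in (0:ℝ)..(2 * Real.pi),
          Complex.reCLM (Complex.log (1 - a * Complex.exp (θ * Complex.I))) := by
        apply intervalIntegral.integral_congr
        intro θ _
        simp [Complex.log_re]
    _ = Complex.reCLM (∫ θ in (0:ℝ)..(2 * Real.pi),
          Complex.log (1 - a * Complex.exp (θ * Complex.I))) :=
        Complex.reCLM.intervalIntegral_comp_comm hint
    _ = 0 := by rw [key3]; simp

lemma aux_per : Function.Periodic
    (fun θ : ℝ => Real.log (‖1 - Complex.exp (θ * Complex.I)‖)) (2 * Real.pi) := by
  intro θ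
  have : Complex.exp ((↑(θ + 2 * Real.pi)) * Complex.I) = Complex.exp (θ * Complex.I) := by
    push_cast
    rw [add_mul, Complex.exp_add, Complex.exp_two_pi_mul_I, mul_one]
  simp only [this]

lemma aux_shift (α : ℝ) :
    ∫ θ in (0:ℝ)..(2 * Real.pi),
      Real.log (‖1 - Complex.exp ((↑(θ + α)) * Complex.I)‖) =
    ∫ θ in (0:ℝ)..(2 * Real.pi),
      Real.log (‖1 - Complex.exp (θ * Complex.I)‖) := by
  have := intervalIntegral.integral_comp_add_right
    (fun θ : ℝ => Real.log (‖1 - Complex.exp (θ * Complex.I)‖)) α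
    (a := 0) (b := 2 * Real.pi)
  rw [this, zero_add]
  have h2 := aux_per.intervalIntegral_add_eq α 0
  rw [zero_add] at h2
  rw [add_comm (2 * Real.pi) α] at *
  exact h2

lemma aux_core :
    ∫ θ in (0:ℝ)..(2 * Real.pi),
      Real.log (‖1 - Complex.exp (θ * Complex.I)‖) = 0 := by
  set f : ℝ → ℝ := fun θ => Real.log (‖1 - Complex.exp (θ * Complex.I)‖) with hf
  by_cases h : IntervalIntegrable f volume 0 (2 * Real.pi)
  case neg => exact intervalIntegral.integral_undef h
  set J := ∫ θ in (0:ℝ)..(2 * Real.pi), f θ with hJ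
  -- integrability on shifted intervals
  have h2 : IntervalIntegrable f volume (2 * Real.pi) (2 * Real.pi + 2 * Real.pi) := by
    have := (h.comp_sub_right (2 * Real.pi))
    rw [zero_add] at this
    have heq : (fun x => f (x - 2 * Real.pi)) = f := by
      funext x
      have hx := (aux_per (x - 2 * Real.pi)).symm
      rw [sub_add_cancel] at hx
      exact hx
    rwa [heq] at this
  have h3 : IntervalIntegrable f volume Real.pi (Real.pi + 2 * Real.pi) := by
    have ha : IntervalIntegrable f volume Real.pi (2 * Real.pi) := by
      apply h.mono_set
      rw [Set.uIcc_of_le (by linarith [Real.pi_pos]), Set.uIcc_of_le (by positivity)]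
      exact Set.Icc_subset_Icc Real.pi_pos.le le_rfl
    have hb : IntervalIntegrable f volume (2 * Real.pi) (Real.pi + 2 * Real.pi) := by
      apply h2.mono_set
      rw [Set.uIcc_of_le (by linarith [Real.pi_pos]), Set.uIcc_of_le (by linarith [Real.pi_pos])]
      exact Set.Icc_subset_Icc le_rfl (by linarith [Real.pi_pos])
    exact ha.trans hb
  have hπ : IntervalIntegrable (fun θ => f (θ + Real.pi)) volume 0 (2 * Real.pi) := by
    have := h3.comp_add_right Real.pi
    simpa using this
  -- the exceptional set
  have hS : ((circleMap 0 1) ⁻¹' {-1, 1} : Set ℝ).Countable :=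
    (Set.countable_singleton (1:ℂ)).insert (-1) |>.preimage_circleMap 0 one_ne_zero
  have hae : ∀ᵐ θ : ℝ, Complex.exp (θ * Complex.I) ≠ 1 ∧ Complex.exp (θ * Complex.I) ≠ -1 := by
    have h0 := hS.measure_zero volume
    rw [← MeasureTheory.compl_mem_ae_iff] at h0
    filter_upwards [h0] with θ hθ
    simp only [circleMap, Set.mem_preimage, Set.mem_insert_iff, Set.mem_singleton_iff,
      Set.mem_compl_iff, zero_add, one_mul, Complex.ofReal_one] at hθ
    push_neg at hθ
    exact ⟨hθ.2, hθ.1⟩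
  -- pointwise doubling identity a.e.
  have hdouble : ∫ θ in (0:ℝ)..(2 * Real.pi), f (2 * θ) =
      ∫ θ in (0:ℝ)..(2 * Real.pi), (f θ + f (θ + Real.pi)) := by
    apply intervalIntegral.integral_congr_ae
    filter_upwards [hae] with θ hθ _
    obtain ⟨h1, hm1⟩ := hθ
    set z := Complex.exp (θ * Complex.I) with hz
    have e2 : Complex.exp ((↑(2 * θ)) * Complex.I) = z ^ 2 := by
      rw [hz, ← Complex.exp_nat_mul]
      push_cast
      ring_nf
    have eπ : Complex.exp ((↑(θ + Real.pi)) * Complex.I) = -z := by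
      push_cast
      rw [add_mul, Complex.exp_add, Complex.exp_pi_mul_I, hz]
      ring
    have hprod : 1 - z ^ 2 = (1 - z) * (1 + z) := by ring
    have hz1 : (1 : ℂ) - z ≠ 0 := sub_ne_zero.mpr (Ne.symm h1)
    have hz2 : (1 : ℂ) + z ≠ 0 := by
      intro hc
      apply hm1
      linear_combination hc
    simp only [hf, e2, eπ, hprod, norm_mul, sub_neg_eq_add]
    rw [Real.log_mul (norm_ne_zero_iff.mpr hz1) (norm_ne_zero_iff.mpr hz2)]
  -- evaluate LHS of hdouble
  have hlhs : ∫ θ in (0:ℝ)..(2 * Real.pi), f (2 * θ) = J := by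
    have := intervalIntegral.integral_comp_mul_left f (a := 0) (b := 2 * Real.pi)
      (c := (2:ℝ)) two_ne_zero
    rw [this, mul_zero]
    have hsplit : ∫ x in (0:ℝ)..(2 * (2 * Real.pi)), f x =
        (∫ x in (0:ℝ)..(2 * Real.pi), f x) +
        ∫ x in (2 * Real.pi)..(2 * (2 * Real.pi)), f x := by
      rw [intervalIntegral.integral_add_adjacent_intervals h (by
        have := h2; rwa [show (2:ℝ) * Real.pi + 2 * Real.pi = 2 * (2 * Real.pi) by ring] at this)]
    have hper2 : ∫ x in (2 * Real.pi)..(2 * (2 * Real.pi)), f x = J := by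
      have := aux_per.intervalIntegral_add_eq (2 * Real.pi) 0
      rw [zero_add] at this
      rwa [show (2:ℝ) * Real.pi + 2 * Real.pi = 2 * (2 * Real.pi) by ring] at this
    rw [hsplit, hper2, ← hJ, smul_eq_mul]
    ring
  -- evaluate RHS of hdouble
  have hrhs : ∫ θ in (0:ℝ)..(2 * Real.pi), (f θ + f (θ + Real.pi)) = J + J := by
    rw [intervalIntegral.integral_add h hπ]
    congr 1
    have := intervalIntegral.integral_comp_add_right f Real.pi (a := 0) (b := 2 * Real.pi)
    rw [this, zero_add]
    have h2 := aux_per.intervalIntegral_add_eq Real.pi 0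
    rw [zero_add] at h2
    rw [add_comm (2 * Real.pi) Real.pi]
    exact h2
  have : J = J + J := hlhs.symm.trans (hdouble.trans hrhs)
  linarith

lemma aux_unit {a : ℂ} (ha : ‖a‖ = 1) :
    ∫ θ in (0:ℝ)..(2 * Real.pi),
      Real.log (‖1 - a * Complex.exp (θ * Complex.I)‖) = 0 := by
  have hrep : a = Complex.exp ((Complex.arg a : ℂ) * Complex.I) := by
    have := Complex.norm_mul_exp_arg_mul_I a
    rw [ha] at this
    simpa using this.symm
  have hkey : ∀ θ : ℝ, a * Complex.exp (θ * Complex.I) =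
      Complex.exp ((↑(θ + Complex.arg a)) * Complex.I) := by
    intro θ
    rw [show ((↑(θ + Complex.arg a) : ℂ)) * Complex.I
        = θ * Complex.I + (Complex.arg a) * Complex.I by push_cast; ring, Complex.exp_add]
    conv_lhs => rw [hrep]
    ring
  calc ∫ θ in (0:ℝ)..(2 * Real.pi),
        Real.log (‖1 - a * Complex.exp (θ * Complex.I)‖)
      = ∫ θ in (0:ℝ)..(2 * Real.pi),
        Real.log (‖1 - Complex.exp ((↑(θ + Complex.arg a)) * Complex.I)‖) := by
        apply intervalIntegral.integral_congr
        intro θ _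
        simp only [hkey θ]
    _ = 0 := by rw [aux_shift, aux_core]

lemma aux_big {a : ℂ} (ha : 1 < ‖a‖) :
    ∫ θ in (0:ℝ)..(2 * Real.pi),
      Real.log (‖1 - a * Complex.exp (θ * Complex.I)‖) =
      2 * Real.pi * Real.log (‖a‖) := by
  have ha0 : a ≠ 0 := by
    intro h; rw [h] at ha; simp at ha; norm_num at ha
  set b : ℂ := (starRingEnd ℂ) a⁻¹ with hb
  have hbabs : ‖b‖ < 1 := by
    rw [hb, Complex.norm_conj, norm_inv]
    rw [inv_lt_one_iff₀]
    right; exact ha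
  have hkey : ∀ θ : ℝ, Real.log (‖1 - a * Complex.exp (θ * Complex.I)‖) =
      Real.log (‖a‖) +
      Real.log (‖1 - b * Complex.exp (θ * Complex.I)‖) := by
    intro θ
    set z := Complex.exp (θ * Complex.I) with hz
    have hz0 : z ≠ 0 := Complex.exp_ne_zero _
    have hzabs : ‖z‖ = 1 := by rw [hz, Complex.norm_exp]; simp
    have hzinv : (starRingEnd ℂ) z = z⁻¹ := by
      have h1 : (starRingEnd ℂ) z * z = 1 := by
        rw [mul_comm, Complex.mul_conj, Complex.normSq_eq_norm_sq, hzabs]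
        norm_num
      exact eq_inv_of_mul_eq_one_left h1
    have hfact : 1 - a * z = (-a * z) * (starRingEnd ℂ) (1 - b * z) := by
      rw [map_sub, map_mul, hb, RingHom.map_one, Complex.conj_conj, hzinv]
      field_simp
      ring
    rw [hfact, norm_mul, norm_mul, Complex.norm_conj, norm_neg, hzabs, mul_one]
    have hbz : 1 - b * z ≠ 0 := by
      intro hc
      have : ‖b * z‖ < 1 := by
        rw [norm_mul, hzabs, mul_one]; exact hbabs
      rw [sub_eq_zero] at hc
      rw [← hc] at this
      simp at this
    rw [Real.log_mul (by simpa using ha0) (norm_ne_zero_iff.mpr hbz)]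
  rw [intervalIntegral.integral_congr (g := fun θ => Real.log (‖a‖) +
      Real.log (‖1 - b * Complex.exp (θ * Complex.I)‖)) (fun θ _ => hkey θ)]
  rw [intervalIntegral.integral_add (intervalIntegrable_const) ((aux_cont hbabs).intervalIntegrable _ _)]
  rw [aux_small hbabs, add_zero, intervalIntegral.integral_const, smul_eq_mul, sub_zero]

theorem integral_log_abs_one_sub (a : ℂ) :
    (‖a‖ ≤ 1 →
      ∫ θ in (0:ℝ)..(2 * Real.pi),
        Real.log (‖1 - a * Complex.exp (θ * Complex.I)‖) = 0) ∧
    (1 < ‖a‖ →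
      ∫ θ in (0:ℝ)..(2 * Real.pi),
        Real.log (‖1 - a * Complex.exp (θ * Complex.I)‖) =
        2 * Real.pi * Real.log (‖a‖)) := by
  constructor
  · intro ha
    rcases lt_or_eq_of_le ha with h | h
    · exact aux_small h
    · exact aux_unit h
  · exact aux_big
end
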